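/- If (a + bx)(c + dx) ≥ 0 for all real x, where a, b, c, d are rational and a + b√2 > 0 and c + d√2 > 0, then there exists a nonnegative rational k with c = ka and d = kb. -/

import Mathlib

/-- If (a + bx)(c + dx) ≥ 0 for all real x, where a, b, c, d ∈ ℚ and
a + b√2 > 0 and c + d√2 > 0, then c = ka and d = kb for some nonnegative
rational k. -/
theorem exists_nonneg_rat_ratio_of_xArea_nonneg
    (a b c d : ℚ)
    (ha : 0 < (a : ℝ) + (b : ℝ) * Real.sqrt 2)
    (hc : 0 < (c : ℝ) + (d : ℝ) * Real.sqrt 2)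
    (h : ∀ x : ℝ, 0 ≤ ((a : ℝ) + (b : ℝ) * x) * ((c : ℝ) + (d : ℝ) * x)) :
    ∃ k : ℚ, 0 ≤ k ∧ c = k * a ∧ d = k * b := by
  by_cases hb : b = 0
  · subst hb
    have ha' : (0:ℚ) < a := by
      have : (0:ℝ) < (a:ℝ) := by simpa using ha
      exact_mod_cast this
    have ha'' : (0:ℝ) < (a:ℝ) := by exact_mod_cast ha'
    have hd : d = 0 := by
      by_contra hd
      have hd' : ((d:ℝ)) ≠ 0 := by exact_mod_cast hd
      have h1 := h ((-(c:ℝ)-1)/d)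
      have h2 : ((c:ℝ) + d * ((-(c:ℝ)-1)/d)) = -1 := by field_simp; ring
      rw [h2] at h1
      simp at h1
      nlinarith
    have hc0 : (0:ℚ) ≤ c := by
      have h1 := h 0
      simp at h1
      have : (0:ℚ) ≤ a * c := by exact_mod_cast h1
      nlinarith
    refine ⟨c / a, by positivity, by field_simp, by simp [hd]⟩
  · have hb' : ((b:ℝ)) ≠ 0 := by exact_mod_cast hb
    -- discriminant argument gives a*d = b*c
    have key : ∀ x : ℝ, 0 ≤ ((b:ℝ)*d) * (x*x) + ((a:ℝ)*d + b*c) * x + (a:ℝ)*c := by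
      intro x
      have h1 := h x
      nlinarith [h1]
    have hdisc := discrim_le_zero key
    rw [discrim] at hdisc
    have hadbc : ((a:ℝ)*d - b*c) = 0 := by
      nlinarith [sq_nonneg ((a:ℝ)*d - b*c)]
    have hadbcQ : a * d = b * c := by
      have : ((a:ℝ)*d) = ((b:ℝ)*c) := by linarith
      exact_mod_cast this
    have hk : (0:ℚ) ≤ d / b := by
      have h1 := h ((1 - (a:ℝ))/b)
      have e1 : ((a:ℝ) + b * ((1 - (a:ℝ))/b)) = 1 := by field_simp; ring
      have e2 : ((c:ℝ) + d * ((1 - (a:ℝ))/b)) = (d:ℝ)/b := by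
        have : ((a:ℝ)*d) = ((b:ℝ)*c) := by linarith
        field_simp
        nlinarith [this]
      rw [e1, e2, one_mul] at h1
      have : (0:ℝ) ≤ ((d/b : ℚ) : ℝ) := by push_cast; linarith
      exact_mod_cast this
    refine ⟨d / b, hk, ?_, by field_simp⟩
    field_simp
    linarith [hadbcQ]
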